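/- Fix integers r ≥ 1 and k ≥ 1. With x_j = cos(jπ/n) the Chebyshev points, define P_r^{0,k}(n) = Σ_{j=1, j≠k}^{n} (1 − cos(jπ/n))^{−r} (the power sum at the node x_0 = 1 with the node x_k excluded). Then lim_{n→∞} P_r^{0,k}(n)/n^{2r} = (2^r/π^{2r})·(ζ(2r) − 1/k^{2r}), where ζ is the Riemann zeta function. -/

import Mathlib

open Filter Finset Topology Real

/-- Half-angle: `1 - cos θ = 2 sin(θ/2)^2`. -/
lemma one_sub_cos_eq (θ : ℝ) : 1 - Real.cos θ = 2 * Real.sin (θ / 2) ^ 2 := by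
  have h := Real.sin_sq_eq_half_sub (θ / 2)
  rw [mul_div_cancel₀ θ (by norm_num : (2:ℝ) ≠ 0)] at h
  linarith

/-- Key lower bound: for `1 ≤ j ≤ n`, `2 j²/n² ≤ 1 - cos(jπ/n)`. -/
lemma key_bound (n j : ℕ) (hj : 1 ≤ j) (hjn : j ≤ n) :
    2 * (j:ℝ)^2 / (n:ℝ)^2 ≤ 1 - Real.cos (j * Real.pi / n) := by
  have hπ := Real.pi_pos
  have hn : (0:ℝ) < n := by exact_mod_cast (by omega : 0 < n)
  have hjR : (0:ℝ) < j := by exact_mod_cast hj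
  have hjnR : (j:ℝ) ≤ n := by exact_mod_cast hjn
  have hx0 : (0:ℝ) ≤ j * Real.pi / n / 2 := by positivity
  have hx2 : j * Real.pi / n / 2 ≤ Real.pi / 2 := by
    rw [div_le_div_iff₀ (by norm_num) (by norm_num)]
    rw [div_mul_eq_mul_div, div_le_iff₀ hn]
    nlinarith
  have hsin := Real.mul_le_sin hx0 hx2
  have h1 : (j:ℝ)/n ≤ Real.sin (j * Real.pi / n / 2) := by
    have he : 2 / Real.pi * (j * Real.pi / n / 2) = (j:ℝ)/n := by
      field_simp
    linarith [he ▸ hsin]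
  rw [one_sub_cos_eq]
  have h2 : ((j:ℝ)/n)^2 ≤ Real.sin (j * Real.pi / n / 2) ^ 2 :=
    pow_le_pow_left₀ (by positivity) h1 2
  have h3 : ((j:ℝ)/n)^2 = (j:ℝ)^2/(n:ℝ)^2 := div_pow _ _ _
  rw [mul_div_assoc, ← h3]
  linarith

/-- `sin x / x → 1` for the sequence `x = c / n` with `c > 0`. -/
lemma sin_div_self_tendsto (c : ℝ) (hc : 0 < c) :
    Filter.Tendsto (fun n : ℕ => Real.sin (c / n) / (c / n)) atTop (𝓝 1) := by
  have hderiv : HasDerivAt Real.sin 1 0 := by simpa using Real.hasDerivAt_sin 0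
  have hslope := hasDerivAt_iff_tendsto_slope.mp hderiv
  have hsl : slope Real.sin 0 = fun y : ℝ => Real.sin y / y := by
    funext y; simp [slope_def_field]
  rw [hsl] at hslope
  have hx : Filter.Tendsto (fun n : ℕ => c / (n:ℝ)) atTop (𝓝[≠] 0) := by
    rw [tendsto_nhdsWithin_iff]
    constructor
    · have := tendsto_one_div_atTop_nhds_zero_nat.const_mul c
      simpa [div_eq_mul_inv] using this
    · filter_upwards [eventually_ge_atTop 1] with n hn
      have hn' : (0:ℝ) < n := by exact_mod_cast (by omega : 0 < n)
      exact ne_of_gt (by positivity)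
  exact hslope.comp hx

theorem stmt_8 (r : ℕ) (hr : 1 ≤ r) (k : ℕ) (hk : 1 ≤ k) :
    Filter.Tendsto
      (fun n : ℕ =>
        (((∑ j ∈ (Finset.Icc 1 n).erase k, 1 / (1 - Real.cos (j * Real.pi / n)) ^ r) /
          (n : ℝ) ^ (2 * r) : ℝ) : ℂ))
      Filter.atTop
      (nhds ((2 ^ r / (Real.pi : ℂ) ^ (2 * r)) *
        (riemannZeta (2 * r) - 1 / (k : ℂ) ^ (2 * r)))) := by
  have hπ := Real.pi_pos
  have h2r : 1 < 2 * r := by omega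
  set p : ℕ := 2 * r with hp
  -- the summand functions
  set f : ℕ → ℕ → ℝ := fun n j =>
    if j ∈ (Finset.Icc 1 n).erase k
    then 1 / ((1 - Real.cos (j * Real.pi / n)) ^ r * (n:ℝ) ^ p) else 0 with hf
  set g : ℕ → ℝ := fun j => if j = k then 0 else 2 ^ r / (Real.pi * j) ^ p with hg
  -- the finite sum equals the tsum of f
  have hS : ∀ n : ℕ,
      (∑ j ∈ (Finset.Icc 1 n).erase k, 1 / (1 - Real.cos (j * Real.pi / n)) ^ r) / (n:ℝ) ^ p
        = ∑' j, f n j := by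
    intro n
    rw [eq_comm, tsum_eq_sum (s := (Finset.Icc 1 n).erase k) (fun j hj => by
      simp only [hf]; exact if_neg hj)]
    rw [Finset.sum_div]
    refine Finset.sum_congr rfl fun j hj => ?_
    simp only [hf, if_pos hj]; rw [div_div]
  -- real-valued limit via dominated convergence
  have hZsum : Summable (fun j : ℕ => 1 / (j:ℝ) ^ p) := summable_one_div_nat_pow.mpr h2r
  have hReal : Filter.Tendsto (fun n => ∑' j, f n j) atTop (𝓝 (∑' j, g j)) := by
    apply tendsto_tsum_of_dominated_convergence
      (bound := fun j : ℕ => 1 / (2 ^ r * (j:ℝ) ^ p))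
    · apply (hZsum.mul_left ((2:ℝ)^r)⁻¹).congr
      intro j
      field_simp
    · -- pointwise limits
      intro j
      rcases eq_or_ne j k with hjk | hjk
      · have hgk : g j = 0 := by rw [hg]; simp [hjk]
        rw [hgk]
        refine tendsto_const_nhds.congr fun n => ?_
        simp [hf, hjk]
      rcases Nat.eq_zero_or_pos j with hj0 | hj0
      · subst hj0
        have hg0 : g 0 = 0 := by
          rw [hg]; simp [hjk, zero_pow (by omega : p ≠ 0)]
        rw [hg0]
        refine tendsto_const_nhds.congr fun n => ?_
        simp [hf]
      · -- main case : 1 ≤ j, j ≠ k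
        have hjR : (0:ℝ) < j := by exact_mod_cast hj0
        set c : ℝ := ((j:ℝ) * Real.pi) ^ 2 / 2 with hc
        have hc0 : 0 < c := by positivity
        have hq := sin_div_self_tendsto ((j:ℝ) * Real.pi / 2) (by positivity)
        have hq' : Filter.Tendsto
            (fun n : ℕ => Real.sin ((j:ℝ) * Real.pi / (2 * n)) / ((j:ℝ) * Real.pi / (2 * n)))
            atTop (𝓝 1) := by
          refine hq.congr (fun n => ?_)
          rw [div_div]
        have hF : ContinuousAt (fun t : ℝ => 1 / (c * t ^ 2) ^ r) 1 := by
          apply ContinuousAt.div continuousAt_const (by fun_prop)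
          positivity
        have hall := hF.tendsto.comp hq'
        have hval : 1 / (c * 1 ^ 2) ^ r = g j := by
          rw [hg]; simp only [if_neg hjk]
          rw [one_pow, mul_one, hc, hp, pow_mul, div_pow, one_div_div]
          congr 1
          ring
        rw [hval] at hall
        refine hall.congr' ?_
        filter_upwards [eventually_ge_atTop j] with n hn
        have hn1 : 1 ≤ n := le_trans hj0 hn
        have hnR : (0:ℝ) < n := by exact_mod_cast (by omega : 0 < n)
        have hjmem : j ∈ (Finset.Icc 1 n).erase k :=
          Finset.mem_erase.mpr ⟨hjk, Finset.mem_Icc.mpr ⟨hj0, hn⟩⟩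
        have hxe : (j:ℝ) * Real.pi / n / 2 = (j:ℝ) * Real.pi / (2 * n) := by
          rw [div_div, mul_comm (n:ℝ) 2]
        set x : ℝ := (j:ℝ) * Real.pi / (2 * n) with hxd
        have hx0 : 0 < x := by rw [hxd]; positivity
        have hcos : 1 - Real.cos ((j:ℝ) * Real.pi / n) = 2 * Real.sin x ^ 2 := by
          rw [one_sub_cos_eq, hxe]
        simp only [Function.comp_apply]
        simp only [hf, if_pos hjmem]
        rw [hcos, hp, pow_mul, ← mul_pow]
        congr 2
        rw [div_pow, hc, hxd]
        field_simp
    · -- the bound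
      apply Filter.Eventually.of_forall
      intro n j
      simp only [hf]
      split_ifs with hj
      · rw [Finset.mem_erase, Finset.mem_Icc] at hj
        obtain ⟨hjk, hj1, hjn⟩ := hj
        have hkey := key_bound n j hj1 hjn
        have hnR : (0:ℝ) < n := by exact_mod_cast (by omega : 0 < n)
        have hjR : (0:ℝ) < j := by exact_mod_cast hj1
        have hpos : (0:ℝ) < 1 - Real.cos (j * Real.pi / n) :=
          lt_of_lt_of_le (by positivity) hkey
        rw [Real.norm_eq_abs, abs_of_nonneg (by positivity)]
        apply one_div_le_one_div_of_le (by positivity)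
        have e1 : (2 * (j:ℝ)^2 / (n:ℝ)^2) ^ r * (n:ℝ) ^ p = 2 ^ r * (j:ℝ) ^ p := by
          rw [hp, pow_mul, pow_mul, ← mul_pow, div_mul_cancel₀ _ (by positivity), mul_pow]
        calc (2:ℝ) ^ r * (j:ℝ) ^ p = (2 * (j:ℝ)^2 / (n:ℝ)^2) ^ r * (n:ℝ) ^ p := e1.symm
          _ ≤ (1 - Real.cos (j * Real.pi / n)) ^ r * (n:ℝ) ^ p := by
              apply mul_le_mul_of_nonneg_right _ (by positivity)
              exact pow_le_pow_left₀ (by positivity) hkey r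
      · simp only [norm_zero]
        positivity
  -- evaluate the tsum of g
  have hZ : ∑' j, g j = 2 ^ r / Real.pi ^ p * ((∑' j : ℕ, 1 / (j:ℝ) ^ p) - 1 / (k:ℝ) ^ p) := by
    have ha : (fun j : ℕ => (2:ℝ) ^ r / (Real.pi * j) ^ p)
        = fun j : ℕ => 2 ^ r / Real.pi ^ p * (1 / (j:ℝ) ^ p) := by
      funext j
      rw [mul_pow, div_mul_eq_div_div, div_eq_mul_one_div]
    have hasum : Summable (fun j : ℕ => (2:ℝ) ^ r / (Real.pi * j) ^ p) := by
      rw [ha]; exact hZsum.mul_left _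
    have hbsum : Summable (fun j : ℕ => if j = k then (2:ℝ) ^ r / (Real.pi * k) ^ p else 0) :=
      summable_of_ne_finset_zero (s := {k}) (fun b hb => by
        simp only [Finset.mem_singleton] at hb; exact if_neg hb)
    have hgab : g = fun j =>
        (2:ℝ) ^ r / (Real.pi * j) ^ p - (if j = k then (2:ℝ) ^ r / (Real.pi * k) ^ p else 0) := by
      funext j
      rw [hg]
      rcases eq_or_ne j k with h | h
      · subst h; simp
      · simp [h]
    rw [hgab, Summable.tsum_sub hasum hbsum, tsum_ite_eq, ha, tsum_mul_left]
    have hkcast : ((2:ℝ) ^ r / (Real.pi * k) ^ p) = 2 ^ r / Real.pi ^ p * (1 / (k:ℝ) ^ p) := by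
      rw [mul_pow, div_mul_eq_div_div, div_eq_mul_one_div]
    rw [hkcast, mul_sub]
  -- relate to riemannZeta and cast to ℂ
  have hzeta : riemannZeta (2 * r) = (((∑' j : ℕ, 1 / (j:ℝ) ^ p) : ℝ) : ℂ) := by
    have : ((2 * r : ℕ) : ℂ) = 2 * (r : ℂ) := by push_cast; ring
    rw [← this, zeta_nat_eq_tsum_of_gt_one h2r, Complex.ofReal_tsum]
    congr 1
    funext n
    push_cast
    rfl
  have hgoal : ((2:ℂ) ^ r / (Real.pi : ℂ) ^ (2 * r)) *
      (riemannZeta (2 * r) - 1 / (k : ℂ) ^ (2 * r))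
      = (((2:ℝ) ^ r / Real.pi ^ p * ((∑' j : ℕ, 1 / (j:ℝ) ^ p) - 1 / (k:ℝ) ^ p) : ℝ) : ℂ) := by
    rw [hzeta, hp]
    push_cast
    ring
  rw [hgoal, ← hZ]
  have := (Complex.continuous_ofReal.tendsto _).comp (hReal.congr (fun n => (hS n).symm))
  exact this
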